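/- Let H₁ and H₂ be complex Hilbert spaces, let X ⊆ B(H₂, H₁) be a norm-closed linear subspace, and let z ∈ B(H₁, H₂) satisfy z* ∘ z = 1_{H₁} and z ∘ z* = 1_{H₂} (i.e., z is a unitary from H₁ onto H₂). Assume that x ∘ z ∘ y ∈ X for all x, y ∈ X, and that {x ∘ z : x ∈ X} = {z* ∘ x* : x ∈ X} as subsets of B(H₁). Then: (a) z* ∘ x* ∘ z* ∈ X for every x ∈ X; (b) equipping X with the product x ⋆ y := x ∘ z ∘ y and the involution x^♯ := z* ∘ x* ∘ z*, one obtains a C*-algebra; explicitly, ⋆ is an associative bilinear product on X with ‖x ⋆ y‖ ≤ ‖x‖·‖y‖, ♯ is a conjugate-linear map on X with (x^♯)^♯ = x and (x ⋆ y)^♯ = y^♯ ⋆ x^♯, and the C*-identity ‖x^♯ ⋆ x‖ = ‖x‖² holds for all x, y ∈ X. -/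

import Mathlib

/-- The product `x ⋆ y := x ∘ z ∘ y` on operators `H₂ → H₁` induced by a
quasi-multiplier `z : H₁ → H₂`. -/
noncomputable def qMul {H₁ H₂ : Type*} [NormedAddCommGroup H₁] [InnerProductSpace ℂ H₁]
    [NormedAddCommGroup H₂] [InnerProductSpace ℂ H₂]
    (z : H₁ →L[ℂ] H₂) (x y : H₂ →L[ℂ] H₁) : H₂ →L[ℂ] H₁ :=
  x ∘L (z ∘L y)

/-- The involution `x^♯ := z* ∘ x* ∘ z*` on operators `H₂ → H₁` induced by a
quasi-multiplier `z : H₁ → H₂`. -/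
noncomputable def qStar {H₁ H₂ : Type*} [NormedAddCommGroup H₁] [InnerProductSpace ℂ H₁]
    [CompleteSpace H₁] [NormedAddCommGroup H₂] [InnerProductSpace ℂ H₂] [CompleteSpace H₂]
    (z : H₁ →L[ℂ] H₂) (x : H₂ →L[ℂ] H₁) : H₂ →L[ℂ] H₁ :=
  (ContinuousLinearMap.adjoint z) ∘L
    ((ContinuousLinearMap.adjoint x) ∘L (ContinuousLinearMap.adjoint z))

/-- If `z` is a unitary `H₁ → H₂`, `X ∘ z ∘ X ⊆ X` and `X ∘ z = z* ∘ X*`, then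
`X` with the product `x ⋆ y = x ∘ z ∘ y` and involution `x^♯ = z* ∘ x* ∘ z*` is a
C*-algebra: `♯` maps `X` to `X`, `⋆` is an associative bilinear submultiplicative
product, `♯` is a conjugate-linear involution which is anti-multiplicative, and the
C*-identity `‖x^♯ ⋆ x‖ = ‖x‖²` holds. -/
theorem stmt_9 {H₁ H₂ : Type*} [NormedAddCommGroup H₁] [InnerProductSpace ℂ H₁]
    [CompleteSpace H₁] [NormedAddCommGroup H₂] [InnerProductSpace ℂ H₂] [CompleteSpace H₂]
    (X : Submodule ℂ (H₂ →L[ℂ] H₁)) (hXclosed : IsClosed (X : Set (H₂ →L[ℂ] H₁)))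
    (z : H₁ →L[ℂ] H₂)
    (hz1 : (ContinuousLinearMap.adjoint z) ∘L z = 1)
    (hz2 : z ∘L (ContinuousLinearMap.adjoint z) = 1)
    (hmul : ∀ x ∈ X, ∀ y ∈ X, qMul z x y ∈ X)
    (hsets : {w : H₁ →L[ℂ] H₁ | ∃ x ∈ X, w = x ∘L z} =
      {w : H₁ →L[ℂ] H₁ | ∃ x ∈ X,
        w = (ContinuousLinearMap.adjoint z) ∘L (ContinuousLinearMap.adjoint x)}) :
    (∀ x ∈ X, qStar z x ∈ X) ∧
    (∀ x ∈ X, ∀ y ∈ X, ∀ w ∈ X, qMul z (qMul z x y) w = qMul z x (qMul z y w)) ∧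
    (∀ x ∈ X, ∀ y ∈ X, ∀ w ∈ X,
      qMul z (x + y) w = qMul z x w + qMul z y w ∧
      qMul z x (y + w) = qMul z x y + qMul z x w) ∧
    (∀ c : ℂ, ∀ x ∈ X, ∀ y ∈ X,
      qMul z (c • x) y = c • qMul z x y ∧ qMul z x (c • y) = c • qMul z x y) ∧
    (∀ x ∈ X, ∀ y ∈ X, ‖qMul z x y‖ ≤ ‖x‖ * ‖y‖) ∧
    (∀ x ∈ X, ∀ y ∈ X, qStar z (x + y) = qStar z x + qStar z y) ∧
    (∀ c : ℂ, ∀ x ∈ X, qStar z (c • x) = (starRingEnd ℂ c) • qStar z x) ∧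
    (∀ x ∈ X, qStar z (qStar z x) = x) ∧
    (∀ x ∈ X, ∀ y ∈ X, qStar z (qMul z x y) = qMul z (qStar z y) (qStar z x)) ∧
    (∀ x ∈ X, ‖qMul z (qStar z x) x‖ = ‖x‖ ^ 2) := by
  classical
  have haux1 : ∀ v : H₁, ContinuousLinearMap.adjoint z (z v) = v := by
    intro v
    have := congrArg (fun A : H₁ →L[ℂ] H₁ => A v) hz1
    simpa using this
  have haux2 : ∀ w : H₂, z (ContinuousLinearMap.adjoint z w) = w := by
    intro w
    have := congrArg (fun A : H₂ →L[ℂ] H₂ => A w) hz2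
    simpa using this
  have hnormpt : ∀ w : H₂, ‖ContinuousLinearMap.adjoint z w‖ = ‖w‖ := by
    intro w
    have h : (inner ℂ (ContinuousLinearMap.adjoint z w) (ContinuousLinearMap.adjoint z w) : ℂ)
        = inner ℂ w w := by
      rw [ContinuousLinearMap.adjoint_inner_left, haux2]
    rw [inner_self_eq_norm_sq_to_K, inner_self_eq_norm_sq_to_K] at h
    have h2 : (‖ContinuousLinearMap.adjoint z w‖ : ℝ) ^ 2 = ‖w‖ ^ 2 := by
      exact_mod_cast h
    nlinarith [norm_nonneg (ContinuousLinearMap.adjoint z w), norm_nonneg w]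
  have hnormcomp : ∀ a : H₂ →L[ℂ] H₂, ‖ContinuousLinearMap.adjoint z ∘L a‖ = ‖a‖ := by
    intro a
    refine le_antisymm ?_ ?_
    · refine ContinuousLinearMap.opNorm_le_bound _ (norm_nonneg a) fun v => ?_
      simp only [ContinuousLinearMap.comp_apply, hnormpt]
      exact a.le_opNorm v
    · refine ContinuousLinearMap.opNorm_le_bound _ (norm_nonneg _) fun v => ?_
      have : ‖a v‖ = ‖(ContinuousLinearMap.adjoint z ∘L a) v‖ := by
        simp [hnormpt]
      rw [this]
      exact (ContinuousLinearMap.adjoint z ∘L a).le_opNorm v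
  refine ⟨?_, ?_, ?_, ?_, ?_, ?_, ?_, ?_, ?_, ?_⟩
  · -- qStar maps X to X
    intro x hx
    have hmem : (ContinuousLinearMap.adjoint z ∘L ContinuousLinearMap.adjoint x)
        ∈ {w : H₁ →L[ℂ] H₁ | ∃ x ∈ X, w = x ∘L z} := by
      rw [hsets]; exact ⟨x, hx, rfl⟩
    obtain ⟨y, hy, hyeq⟩ := hmem
    have : qStar z x = y := by
      have := congrArg (fun A : H₁ →L[ℂ] H₁ => A ∘L ContinuousLinearMap.adjoint z) hyeq
      simp only [qStar] at *
      rw [ContinuousLinearMap.comp_assoc] at this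
      ext v
      have := congrArg (fun A : H₂ →L[ℂ] H₁ => A v) this
      simpa [haux1, haux2] using this
    rw [this]; exact hy
  · intro x _ y _ w _
    simp [qMul, ContinuousLinearMap.comp_assoc]
  · intro x _ y _ w _
    constructor <;> (ext v; simp [qMul])
  · intro c x _ y _
    constructor <;> (ext v; simp [qMul])
  · intro x _ y _
    calc ‖x ∘L (z ∘L y)‖ ≤ ‖x‖ * ‖z ∘L y‖ := ContinuousLinearMap.opNorm_comp_le _ _
      _ ≤ ‖x‖ * ‖y‖ := by
          refine mul_le_mul_of_nonneg_left ?_ (norm_nonneg x)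
          refine ContinuousLinearMap.opNorm_le_bound _ (norm_nonneg y) fun v => ?_
          have : ‖z (y v)‖ = ‖y v‖ := by
            have h : (inner ℂ (z (y v)) (z (y v)) : ℂ) = inner ℂ (y v) (y v) := by
              rw [← ContinuousLinearMap.adjoint_inner_left, haux1]
            rw [inner_self_eq_norm_sq_to_K, inner_self_eq_norm_sq_to_K] at h
            have h2 : (‖z (y v)‖ : ℝ) ^ 2 = ‖y v‖ ^ 2 := by exact_mod_cast h
            nlinarith [norm_nonneg (z (y v)), norm_nonneg (y v)]
          simp only [ContinuousLinearMap.comp_apply, this]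
          exact y.le_opNorm v
  · intro x _ y _
    simp [qStar, ContinuousLinearMap.comp_add, ContinuousLinearMap.add_comp, map_add]
  · intro c x _
    have hadj : ContinuousLinearMap.adjoint (c • x)
        = (starRingEnd ℂ c) • ContinuousLinearMap.adjoint x :=
      map_smulₛₗ (ContinuousLinearMap.adjoint : (H₂ →L[ℂ] H₁) ≃ₗᵢ⋆[ℂ] _).toLinearEquiv c x
    ext v
    simp [qStar, hadj]
  · intro x _
    ext v
    simp [qStar, ContinuousLinearMap.adjoint_comp, ContinuousLinearMap.adjoint_adjoint,
      haux1, haux2]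
  · intro x _ y _
    ext v
    simp [qStar, qMul, ContinuousLinearMap.adjoint_comp, ContinuousLinearMap.adjoint_adjoint,
      haux1, haux2]
  · intro x _
    have key : qMul z (qStar z x) x
        = ContinuousLinearMap.adjoint z ∘L (ContinuousLinearMap.adjoint x ∘L x) := by
      ext v
      simp [qMul, qStar, haux1]
    rw [key, hnormcomp, ContinuousLinearMap.norm_adjoint_comp_self, sq]
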